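/- Let Y be a centered Gaussian vector in ℝⁿ with covariance matrix 𝔅, let w ∈ Δₙ (w has nonnegative entries summing to 1), and let a₁, …, aₙ > 0. Then by Jensen's (weighted AM–GM) inequality, ∑ᵢ aᵢ·e^{Yᵢ} ≤ e^{−k} implies ∑ᵢ wᵢYᵢ + ∑ᵢ wᵢ log(aᵢ/wᵢ) ≤ −k (for wᵢ > 0, interpreting wᵢ log(aᵢ/wᵢ) = 0 when wᵢ = 0), hence P[∑ᵢ aᵢ e^{Yᵢ} ≤ e^{−k}] ≤ N(−(k + ∑ᵢ wᵢ log(aᵢ/wᵢ))/√(wᵀ𝔅w)) whenever k + ∑ᵢ wᵢ log(aᵢ/wᵢ) > 0 and wᵀ𝔅w > 0, where N is the standard normal CDF. -/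

import Mathlib

open MeasureTheory ProbabilityTheory Matrix

noncomputable def stdNormalCDF (x : ℝ) : ℝ :=
  ∫ t in Set.Iic x, Real.exp (-t ^ 2 / 2) / Real.sqrt (2 * Real.pi)

lemma stdNormal_apply (x : ℝ) :
    ((gaussianReal 0 1) (Set.Iic x)).toReal = stdNormalCDF x := by
  rw [gaussianReal_apply_eq_integral 0 one_ne_zero (Set.Iic x)]
  rw [ENNReal.toReal_ofReal (integral_nonneg fun t => gaussianPDFReal_nonneg 0 1 t)]
  unfold stdNormalCDF
  refine setIntegral_congr_fun measurableSet_Iic fun t _ => ?_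
  simp [gaussianPDFReal, div_eq_inv_mul]

lemma gauss_scale (v : ℝ) (hv : 0 < v) (c : ℝ) :
    gaussianReal 0 (Real.toNNReal v) (Set.Iic c) =
      gaussianReal 0 1 (Set.Iic (c / Real.sqrt v)) := by
  have hσ : 0 < Real.sqrt v := Real.sqrt_pos.mpr hv
  have hmap := gaussianReal_map_const_mul (μ := 0) (v := 1) (Real.sqrt v)
  have hvar : (NNReal.mk (Real.sqrt v ^ 2) (sq_nonneg _)) * 1 = Real.toNNReal v := by
    ext
    simp [Real.sq_sqrt hv.le, Real.coe_toNNReal _ hv.le]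
  rw [hvar, mul_zero] at hmap
  rw [← hmap, Measure.map_apply (by fun_prop) measurableSet_Iic]
  congr 1
  ext t
  simp [Set.mem_Iic, ← le_div_iff₀' hσ]

theorem gaussian_basket_upper_bound {Ω : Type*} [MeasurableSpace Ω] (Pm : Measure Ω)
    [IsProbabilityMeasure Pm] (n : ℕ) (hn : 0 < n)
    (Y : Fin n → Ω → ℝ) (hmeas : ∀ i, Measurable (Y i))
    (𝔅 : Matrix (Fin n) (Fin n) ℝ) (h𝔅 : 𝔅.IsSymm)
    (hGauss : ∀ v : Fin n → ℝ,
      Measure.map (fun ω => ∑ i, v i * Y i ω) Pm =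
        gaussianReal 0 (Real.toNNReal (v ⬝ᵥ 𝔅.mulVec v)))
    (w : Fin n → ℝ) (hw0 : ∀ i, 0 ≤ w i) (hw1 : ∑ i, w i = 1)
    (a : Fin n → ℝ) (ha : ∀ i, 0 < a i) (k : ℝ)
    (hk : 0 < k + ∑ i, w i * Real.log (a i / w i))
    (hvar : 0 < w ⬝ᵥ 𝔅.mulVec w) :
    (∀ ω, ∑ i, a i * Real.exp (Y i ω) ≤ Real.exp (-k) →
      (∑ i, w i * Y i ω) + ∑ i, w i * Real.log (a i / w i) ≤ -k) ∧
    (Pm {ω | ∑ i, a i * Real.exp (Y i ω) ≤ Real.exp (-k)}).toReal ≤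
      stdNormalCDF (-(k + ∑ i, w i * Real.log (a i / w i)) /
        Real.sqrt (w ⬝ᵥ 𝔅.mulVec w)) := by
  have hpoint : ∀ ω, ∑ i, a i * Real.exp (Y i ω) ≤ Real.exp (-k) →
      (∑ i, w i * Y i ω) + ∑ i, w i * Real.log (a i / w i) ≤ -k := by
    intro ω h
    set z : Fin n → ℝ := fun i => a i / w i * Real.exp (Y i ω) with hz
    have hz0 : ∀ i ∈ Finset.univ, (0:ℝ) ≤ z i := fun i _ => by
      have := (ha i).le; have := hw0 i; positivity
    have h1 : ∏ i, z i ^ w i ≤ ∑ i, w i * z i :=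
      Real.geom_mean_le_arith_mean_weighted Finset.univ w z (fun i _ => hw0 i) hw1 hz0
    have h2 : ∑ i, w i * z i ≤ ∑ i, a i * Real.exp (Y i ω) := by
      refine Finset.sum_le_sum fun i _ => ?_
      rcases eq_or_lt_of_le (hw0 i) with hwi | hwi
      · rw [← hwi, zero_mul]; exact mul_nonneg (ha i).le (Real.exp_pos _).le
      · rw [hz]; field_simp; exact le_rfl
    have h3 : ∏ i, z i ^ w i =
        Real.exp (∑ i, (w i * Y i ω + w i * Real.log (a i / w i))) := by
      rw [Real.exp_sum]
      refine Finset.prod_congr rfl fun i _ => ?_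
      rcases eq_or_lt_of_le (hw0 i) with hwi | hwi
      · rw [← hwi]; simp [Real.rpow_zero]
      · have hzi : 0 < z i := by
          have : 0 < a i / w i := div_pos (ha i) hwi
          positivity
        rw [Real.rpow_def_of_pos hzi, hz]
        rw [Real.log_mul (div_pos (ha i) hwi).ne' (Real.exp_ne_zero _), Real.log_exp]
        ring_nf
    have : Real.exp (∑ i, (w i * Y i ω + w i * Real.log (a i / w i))) ≤ Real.exp (-k) :=
      h3 ▸ (h1.trans (h2.trans h))
    have := Real.exp_le_exp.mp this
    rwa [Finset.sum_add_distrib] at this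
  refine ⟨hpoint, ?_⟩
  set L := ∑ i, w i * Real.log (a i / w i) with hL
  set S : Ω → ℝ := fun ω => ∑ i, w i * Y i ω with hS
  have hSmeas : Measurable S := by fun_prop
  have hsub : {ω | ∑ i, a i * Real.exp (Y i ω) ≤ Real.exp (-k)} ⊆
      {ω | S ω ≤ -(k + L)} := by
    intro ω hω
    have := hpoint ω hω
    simp only [Set.mem_setOf_eq, hS]
    linarith
  have hmono : Pm {ω | ∑ i, a i * Real.exp (Y i ω) ≤ Real.exp (-k)} ≤
      Pm {ω | S ω ≤ -(k + L)} := measure_mono hsub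
  have hmap : Pm {ω | S ω ≤ -(k + L)} =
      gaussianReal 0 (Real.toNNReal (w ⬝ᵥ 𝔅.mulVec w)) (Set.Iic (-(k + L))) := by
    rw [← hGauss w, Measure.map_apply (by fun_prop) measurableSet_Iic]
    rfl
  calc (Pm {ω | ∑ i, a i * Real.exp (Y i ω) ≤ Real.exp (-k)}).toReal
      ≤ (Pm {ω | S ω ≤ -(k + L)}).toReal :=
        ENNReal.toReal_mono (measure_ne_top _ _) hmono
    _ = stdNormalCDF (-(k + L) / Real.sqrt (w ⬝ᵥ 𝔅.mulVec w)) := by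
        rw [hmap, gauss_scale _ hvar, stdNormal_apply]
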